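/- Let X be a binomial random variable with n trials and mean μ = E[X] ≥ 1. Then for any constant integer α ≥ 1, E[X · (log(X+2))^α] ≤ C · μ · (log(μ+2))^α for some universal constant C depending only on α. -/

import Mathlib

open scoped BigOperators Nat

-- key combinatorial identity
lemma key_nat (n r j : ℕ) (h : r + j ≤ n) :
    n.choose (r + j) * (r + j).descFactorial r = n.descFactorial r * (n - r).choose j := by
  have hrn : r ≤ n := le_trans (Nat.le_add_right r j) h
  have hj : j ≤ n - r := by omega
  have h1 : n.choose (r + j) * (r + j)! * (n - (r + j))! = n ! :=
    Nat.choose_mul_factorial_mul_factorial h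
  have h2 : j ! * (r + j).descFactorial r = (r + j)! := by
    have := Nat.factorial_mul_descFactorial (show r ≤ r + j from Nat.le_add_right r j)
    simpa [Nat.add_sub_cancel_left] using this
  have h3 : (n - r)! * n.descFactorial r = n ! :=
    Nat.factorial_mul_descFactorial hrn
  have h4 : (n - r).choose j * j ! * ((n - r) - j)! = (n - r)! :=
    Nat.choose_mul_factorial_mul_factorial hj
  apply Nat.eq_of_mul_eq_mul_right
    (show 0 < j ! * ((n - r) - j)! from Nat.mul_pos j.factorial_pos (Nat.factorial_pos _))
  have e : n - (r + j) = (n - r) - j := by omega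
  calc n.choose (r + j) * (r + j).descFactorial r * (j ! * ((n - r) - j)!)
      = n.choose (r + j) * (j ! * (r + j).descFactorial r) * ((n - r) - j)! := by ring
    _ = n.choose (r + j) * (r + j)! * (n - (r + j))! := by rw [h2, e]
    _ = n ! := h1
    _ = n.descFactorial r * ((n - r).choose j * j ! * ((n - r) - j)!) := by rw [h4, ← h3]; ring
    _ = n.descFactorial r * (n - r).choose j * (j ! * ((n - r) - j)!) := by ring

-- factorial-moment sum identity for binomial weights
lemma momsum (n r : ℕ) (q : ℝ) (h0 : 0 ≤ q) (h1 : q ≤ 1) :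
    ∑ k ∈ Finset.range (n + 1),
        (n.choose k : ℝ) * q ^ k * (1 - q) ^ (n - k) * (k.descFactorial r : ℝ)
      = (n.descFactorial r : ℝ) * q ^ r := by
  by_cases hrn : r ≤ n
  · have hsplit : n + 1 = r + (n - r + 1) := by omega
    rw [hsplit, Finset.sum_range_add]
    have hz : ∑ i ∈ Finset.range r,
        (n.choose i : ℝ) * q ^ i * (1 - q) ^ (n - i) * (i.descFactorial r : ℝ) = 0 := by
      apply Finset.sum_eq_zero
      intro i hi
      rw [Finset.mem_range] at hi
      rw [Nat.descFactorial_eq_zero_iff_lt.2 hi]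
      simp
    rw [hz, zero_add]
    have hterm : ∀ i ∈ Finset.range (n - r + 1),
        (n.choose (r + i) : ℝ) * q ^ (r + i) * (1 - q) ^ (n - (r + i)) *
            ((r + i).descFactorial r : ℝ)
          = (n.descFactorial r : ℝ) * q ^ r *
              (q ^ i * (1 - q) ^ ((n - r) - i) * ((n - r).choose i : ℝ)) := by
      intro i hi
      rw [Finset.mem_range] at hi
      have hle : r + i ≤ n := by omega
      have hk := key_nat n r i hle
      have hk' : (n.choose (r + i) : ℝ) * ((r + i).descFactorial r : ℝ)
          = (n.descFactorial r : ℝ) * ((n - r).choose i : ℝ) := by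
        exact_mod_cast congrArg (Nat.cast : ℕ → ℝ) hk
      have he : n - (r + i) = (n - r) - i := by omega
      rw [he, pow_add]
      calc (n.choose (r + i) : ℝ) * (q ^ r * q ^ i) * (1 - q) ^ ((n - r) - i) *
              ((r + i).descFactorial r : ℝ)
          = (n.choose (r + i) : ℝ) * ((r + i).descFactorial r : ℝ) *
              (q ^ r * q ^ i * (1 - q) ^ ((n - r) - i)) := by ring
        _ = (n.descFactorial r : ℝ) * ((n - r).choose i : ℝ) *
              (q ^ r * q ^ i * (1 - q) ^ ((n - r) - i)) := by rw [hk']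
        _ = (n.descFactorial r : ℝ) * q ^ r *
              (q ^ i * (1 - q) ^ ((n - r) - i) * ((n - r).choose i : ℝ)) := by ring
    rw [Finset.sum_congr rfl hterm, ← Finset.mul_sum]
    have hpow : ∑ i ∈ Finset.range (n - r + 1),
        q ^ i * (1 - q) ^ ((n - r) - i) * ((n - r).choose i : ℝ) = 1 := by
      have := add_pow q (1 - q) (n - r)
      simp only [add_sub_cancel, one_pow] at this
      rw [← this]
    rw [hpow, mul_one]
  · have hz : ∀ k ∈ Finset.range (n + 1),
        (n.choose k : ℝ) * q ^ k * (1 - q) ^ (n - k) * (k.descFactorial r : ℝ) = 0 := by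
      intro k hk
      rw [Finset.mem_range] at hk
      rw [Nat.descFactorial_eq_zero_iff_lt.2 (by omega)]
      simp
    rw [Finset.sum_eq_zero hz, Nat.descFactorial_eq_zero_iff_lt.2 (by omega)]
    simp

-- nat power vs descFactorial
lemma pow_le_descFactorial (k r : ℕ) :
    k ^ r ≤ 2 ^ r * k.descFactorial r + (2 * r) ^ r := by
  by_cases h : k < 2 * r
  · calc k ^ r ≤ (2 * r) ^ r := Nat.pow_le_pow_left (le_of_lt h) r
      _ ≤ 2 ^ r * k.descFactorial r + (2 * r) ^ r := Nat.le_add_left _ _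
  · push_neg at h
    have hrk : r ≤ k := by omega
    have h1 : (k + 1 - r) ^ r ≤ k.descFactorial r := k.pow_sub_le_descFactorial r
    have h2 : k ^ r ≤ 2 ^ r * (k + 1 - r) ^ r := by
      rw [← Nat.mul_pow]
      apply Nat.pow_le_pow_left
      omega
    calc k ^ r ≤ 2 ^ r * (k + 1 - r) ^ r := h2
      _ ≤ 2 ^ r * k.descFactorial r := Nat.mul_le_mul_left _ h1
      _ ≤ _ := Nat.le_add_right _ _

-- pointwise bound
lemma pointwise (α : ℕ) (μ : ℝ) (hμ : 1 ≤ μ) (k : ℕ) :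
    (k : ℝ) * Real.log ((k : ℝ) + 2) ^ α ≤
      2 ^ α * Real.log (μ + 2) ^ α * (k : ℝ) +
        2 ^ α * ((k : ℝ) ^ (2 * α + 1) / μ ^ (2 * α)) := by
  have hk0 : (0:ℝ) ≤ (k:ℝ) := Nat.cast_nonneg k
  have hμ0 : (0:ℝ) < μ := lt_of_lt_of_le one_pos hμ
  have hlogμ : 0 ≤ Real.log (μ + 2) := Real.log_nonneg (by linarith)
  by_cases hcase : (k : ℝ) ≤ μ ^ 2
  · have hlog : Real.log ((k : ℝ) + 2) ≤ 2 * Real.log (μ + 2) := by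
      have h1 : Real.log ((k : ℝ) + 2) ≤ Real.log ((μ + 2) ^ 2) := by
        apply Real.log_le_log (by linarith)
        nlinarith
      rwa [Real.log_pow, Nat.cast_ofNat] at h1
    have hlognn : 0 ≤ Real.log ((k : ℝ) + 2) := Real.log_nonneg (by linarith)
    have hp : Real.log ((k : ℝ) + 2) ^ α ≤ (2 * Real.log (μ + 2)) ^ α :=
      pow_le_pow_left₀ hlognn hlog α
    have : (k : ℝ) * Real.log ((k : ℝ) + 2) ^ α ≤ (k : ℝ) * (2 * Real.log (μ + 2)) ^ α :=
      mul_le_mul_of_nonneg_left hp hk0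
    have hsecond : 0 ≤ 2 ^ α * ((k : ℝ) ^ (2 * α + 1) / μ ^ (2 * α)) := by positivity
    rw [mul_pow] at this
    nlinarith [this]
  · push_neg at hcase
    have hk1 : (1:ℝ) ≤ (k:ℝ) := le_trans (by nlinarith) (le_of_lt hcase)
    have hlog : Real.log ((k : ℝ) + 2) ≤ 2 * (k : ℝ) := by
      have := Real.log_le_sub_one_of_pos (show (0:ℝ) < (k:ℝ) + 2 by linarith)
      linarith
    have hlognn : 0 ≤ Real.log ((k : ℝ) + 2) := Real.log_nonneg (by linarith)
    have hp : Real.log ((k : ℝ) + 2) ^ α ≤ (2 * (k : ℝ)) ^ α :=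
      pow_le_pow_left₀ hlognn hlog α
    have h1 : (k : ℝ) * Real.log ((k : ℝ) + 2) ^ α ≤ 2 ^ α * (k : ℝ) ^ (α + 1) := by
      calc (k : ℝ) * Real.log ((k : ℝ) + 2) ^ α ≤ (k : ℝ) * (2 * (k : ℝ)) ^ α :=
            mul_le_mul_of_nonneg_left hp hk0
        _ = 2 ^ α * (k : ℝ) ^ (α + 1) := by rw [mul_pow]; ring
    have h2 : (k : ℝ) ^ (α + 1) ≤ (k : ℝ) ^ (2 * α + 1) / μ ^ (2 * α) := by
      rw [le_div_iff₀ (by positivity)]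
      have hμ2 : μ ^ (2 * α) ≤ (k : ℝ) ^ α := by
        calc μ ^ (2 * α) = (μ ^ 2) ^ α := by rw [← pow_mul]
          _ ≤ (k : ℝ) ^ α := pow_le_pow_left₀ (by positivity) (le_of_lt hcase) α
      calc (k : ℝ) ^ (α + 1) * μ ^ (2 * α) ≤ (k : ℝ) ^ (α + 1) * (k : ℝ) ^ α :=
            mul_le_mul_of_nonneg_left hμ2 (by positivity)
        _ = (k : ℝ) ^ (2 * α + 1) := by rw [← pow_add]; ring_nf
    have hfirst : 0 ≤ 2 ^ α * Real.log (μ + 2) ^ α * (k : ℝ) := by positivity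
    have h3 : 2 ^ α * (k : ℝ) ^ (α + 1) ≤ 2 ^ α * ((k : ℝ) ^ (2 * α + 1) / μ ^ (2 * α)) :=
      mul_le_mul_of_nonneg_left h2 (by positivity)
    linarith

/-- for a binomial random variable `X` with `n` trials and mean
`μ = np ≥ 1`, and any integer `α ≥ 1`, `E[X (log(X+2))^α] ≤ C μ (log(μ+2))^α`
for a constant `C` depending only on `α`. -/
theorem stmt3 (α : ℕ) (hα : 1 ≤ α) :
    ∃ C : ℝ, 0 < C ∧ ∀ (n : ℕ) (p : ENNReal) (hp : p ≤ 1),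
      1 ≤ (n : ℝ) * p.toReal →
      ∑ k : Fin (n + 1),
          ((PMF.binomial p.toNNReal (by simpa using ENNReal.toNNReal_mono ENNReal.one_ne_top hp) n) k).toReal * ((k : ℕ) : ℝ) *
            Real.log (((k : ℕ) : ℝ) + 2) ^ α ≤
        C * ((n : ℝ) * p.toReal) * Real.log ((n : ℝ) * p.toReal + 2) ^ α := by
  set r := 2 * α + 1 with hr
  refine ⟨2 ^ α * (1 + (2 ^ r + (2 * r) ^ r : ℝ)), by positivity, ?_⟩
  intro n p hp hμ1
  set q := p.toReal with hq
  set μ := (n : ℝ) * q with hμdef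
  have hpne : p ≠ ⊤ := ne_top_of_le_ne_top ENNReal.one_ne_top hp
  have hq0 : 0 ≤ q := ENNReal.toReal_nonneg
  have hq1 : q ≤ 1 := by
    rw [hq, ← ENNReal.toReal_one]
    exact ENNReal.toReal_mono ENNReal.one_ne_top hp
  have hμ0 : (0:ℝ) < μ := lt_of_lt_of_le one_pos hμ1
  -- express pmf values in ℝ
  have hpmf : ∀ k : Fin (n + 1), ((PMF.binomial p.toNNReal (by simpa using ENNReal.toNNReal_mono ENNReal.one_ne_top hp) n) k).toReal
      = (n.choose k : ℝ) * q ^ (k : ℕ) * (1 - q) ^ (n - (k : ℕ)) := by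
    intro k
    have hp' : p.toNNReal ≤ 1 := by simpa using ENNReal.toNNReal_mono ENNReal.one_ne_top hp
    change ((PMF.binomial p.toNNReal hp' n) k).toReal = _
    rw [PMF.binomial_apply]
    rw [Fin.val_last]
    rw [ENNReal.coe_toNNReal hpne]
    rw [ENNReal.toReal_mul, ENNReal.toReal_mul, ENNReal.toReal_pow, ENNReal.toReal_pow,
      ENNReal.toReal_sub_of_le hp ENNReal.one_ne_top, ENNReal.toReal_one,
      ENNReal.toReal_natCast]
    ring
  -- convert the Fin sum to a range sum
  have hsum : ∑ k : Fin (n + 1),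
      ((PMF.binomial p.toNNReal (by simpa using ENNReal.toNNReal_mono ENNReal.one_ne_top hp) n) k).toReal * ((k : ℕ) : ℝ) * Real.log (((k : ℕ) : ℝ) + 2) ^ α
      = ∑ k ∈ Finset.range (n + 1),
          (n.choose k : ℝ) * q ^ k * (1 - q) ^ (n - k) * ((k : ℝ) * Real.log ((k : ℝ) + 2) ^ α) := by
    rw [Finset.sum_congr rfl (fun k _ => by rw [hpmf k, mul_assoc])]
    exact Fin.sum_univ_eq_sum_range
      (fun k => (n.choose k : ℝ) * q ^ k * (1 - q) ^ (n - k) * ((k : ℝ) * Real.log ((k : ℝ) + 2) ^ α)) (n + 1)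
  rw [hsum]
  have hw : ∀ k, 0 ≤ (n.choose k : ℝ) * q ^ k * (1 - q) ^ (n - k) := by
    intro k
    have : (0:ℝ) ≤ 1 - q := by linarith
    positivity
  -- sums of moments
  have hmean : ∑ k ∈ Finset.range (n + 1),
      (n.choose k : ℝ) * q ^ k * (1 - q) ^ (n - k) * (k : ℝ) = μ := by
    have := momsum n 1 q hq0 hq1
    simpa [Nat.descFactorial] using this
  have hone : ∑ k ∈ Finset.range (n + 1),
      (n.choose k : ℝ) * q ^ k * (1 - q) ^ (n - k) = 1 := by
    have := momsum n 0 q hq0 hq1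
    simpa using this
  have hdesc : ∑ k ∈ Finset.range (n + 1),
      (n.choose k : ℝ) * q ^ k * (1 - q) ^ (n - k) * (Nat.descFactorial k r : ℝ)
      = (Nat.descFactorial n r : ℝ) * q ^ r := momsum n r q hq0 hq1
  -- moment bound
  have hmoment : ∑ k ∈ Finset.range (n + 1),
      (n.choose k : ℝ) * q ^ k * (1 - q) ^ (n - k) * (k : ℝ) ^ r
      ≤ (2 ^ r + (2 * r) ^ r : ℝ) * μ ^ r := by
    have step : ∀ k ∈ Finset.range (n + 1),
        (n.choose k : ℝ) * q ^ k * (1 - q) ^ (n - k) * (k : ℝ) ^ r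
        ≤ (n.choose k : ℝ) * q ^ k * (1 - q) ^ (n - k) *
            (2 ^ r * (Nat.descFactorial k r : ℝ) + (2 * r : ℝ) ^ r) := by
      intro k _
      apply mul_le_mul_of_nonneg_left _ (hw k)
      have := pow_le_descFactorial k r
      have hcast : ((k : ℝ)) ^ r ≤ 2 ^ r * (Nat.descFactorial k r : ℝ) + ((2 * r : ℕ) : ℝ) ^ r := by
        exact_mod_cast this
      calc ((k:ℝ)) ^ r ≤ 2 ^ r * (Nat.descFactorial k r : ℝ) + ((2 * r : ℕ) : ℝ) ^ r := hcast
        _ = 2 ^ r * (Nat.descFactorial k r : ℝ) + (2 * r : ℝ) ^ r := by push_cast; ring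
    calc ∑ k ∈ Finset.range (n + 1),
          (n.choose k : ℝ) * q ^ k * (1 - q) ^ (n - k) * (k : ℝ) ^ r
        ≤ ∑ k ∈ Finset.range (n + 1),
          (n.choose k : ℝ) * q ^ k * (1 - q) ^ (n - k) *
            (2 ^ r * (Nat.descFactorial k r : ℝ) + (2 * r : ℝ) ^ r) := Finset.sum_le_sum step
      _ = ∑ k ∈ Finset.range (n + 1),
            (2 ^ r * ((n.choose k : ℝ) * q ^ k * (1 - q) ^ (n - k) * (Nat.descFactorial k r : ℝ))
              + (2 * r : ℝ) ^ r * ((n.choose k : ℝ) * q ^ k * (1 - q) ^ (n - k))) :=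
          Finset.sum_congr rfl (fun k _ => by ring)
      _ = 2 ^ r * ((Nat.descFactorial n r : ℝ) * q ^ r) + (2 * r : ℝ) ^ r := by
          rw [Finset.sum_add_distrib, ← Finset.mul_sum, ← Finset.mul_sum, hdesc, hone, mul_one]
      _ ≤ (2 ^ r + (2 * r) ^ r : ℝ) * μ ^ r := by
          have h1 : (Nat.descFactorial n r : ℝ) * q ^ r ≤ μ ^ r := by
            have hd : (Nat.descFactorial n r : ℝ) ≤ (n : ℝ) ^ r := by
              exact_mod_cast Nat.descFactorial_le_pow n r
            calc (Nat.descFactorial n r : ℝ) * q ^ r ≤ (n:ℝ) ^ r * q ^ r :=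
                  mul_le_mul_of_nonneg_right hd (by positivity)
              _ = μ ^ r := by rw [hμdef, mul_pow]
          have h2 : (1:ℝ) ≤ μ ^ r := one_le_pow₀ hμ1
          have h3 : ((2 * r : ℝ)) ^ r ≤ (2 * r : ℝ) ^ r * μ ^ r := by
            nlinarith [pow_nonneg (show (0:ℝ) ≤ 2 * r by positivity) r]
          nlinarith [pow_nonneg (show (0:ℝ) ≤ 2 by norm_num) r]
  -- pointwise bound and combine
  have hpoint : ∀ k ∈ Finset.range (n + 1),
      (n.choose k : ℝ) * q ^ k * (1 - q) ^ (n - k) * ((k : ℝ) * Real.log ((k : ℝ) + 2) ^ α)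
      ≤ (n.choose k : ℝ) * q ^ k * (1 - q) ^ (n - k) *
          (2 ^ α * Real.log (μ + 2) ^ α * (k : ℝ) + 2 ^ α * ((k : ℝ) ^ r / μ ^ (2 * α))) := by
    intro k _
    exact mul_le_mul_of_nonneg_left (pointwise α μ hμ1 k) (hw k)
  have hlog1 : (1:ℝ) ≤ Real.log (μ + 2) := by
    rw [Real.le_log_iff_exp_le (by linarith)]
    calc Real.exp 1 ≤ 2.7182818286 := le_of_lt Real.exp_one_lt_d9
      _ ≤ μ + 2 := by linarith
  have hlogpow : (1:ℝ) ≤ Real.log (μ + 2) ^ α := one_le_pow₀ hlog1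
  calc ∑ k ∈ Finset.range (n + 1),
        (n.choose k : ℝ) * q ^ k * (1 - q) ^ (n - k) * ((k : ℝ) * Real.log ((k : ℝ) + 2) ^ α)
      ≤ ∑ k ∈ Finset.range (n + 1),
        (n.choose k : ℝ) * q ^ k * (1 - q) ^ (n - k) *
          (2 ^ α * Real.log (μ + 2) ^ α * (k : ℝ) + 2 ^ α * ((k : ℝ) ^ r / μ ^ (2 * α))) :=
        Finset.sum_le_sum hpoint
    _ = 2 ^ α * Real.log (μ + 2) ^ α * μ + (2 ^ α / μ ^ (2 * α)) *
          ∑ k ∈ Finset.range (n + 1),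
            (n.choose k : ℝ) * q ^ k * (1 - q) ^ (n - k) * (k : ℝ) ^ r := by
        rw [Finset.sum_congr rfl (fun k (_ : k ∈ Finset.range (n+1)) => show
          (n.choose k : ℝ) * q ^ k * (1 - q) ^ (n - k) *
            (2 ^ α * Real.log (μ + 2) ^ α * (k : ℝ) + 2 ^ α * ((k : ℝ) ^ r / μ ^ (2 * α)))
          = 2 ^ α * Real.log (μ + 2) ^ α * ((n.choose k : ℝ) * q ^ k * (1 - q) ^ (n - k) * (k : ℝ))
            + (2 ^ α / μ ^ (2 * α)) * ((n.choose k : ℝ) * q ^ k * (1 - q) ^ (n - k) * (k : ℝ) ^ r)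
          from by field_simp)]
        rw [Finset.sum_add_distrib, ← Finset.mul_sum, ← Finset.mul_sum, hmean]
    _ ≤ 2 ^ α * Real.log (μ + 2) ^ α * μ + (2 ^ α / μ ^ (2 * α)) *
          ((2 ^ r + (2 * r) ^ r : ℝ) * μ ^ r) := by
        apply add_le_add_right
        exact mul_le_mul_of_nonneg_left hmoment (by positivity)
    _ = 2 ^ α * Real.log (μ + 2) ^ α * μ + 2 ^ α * (2 ^ r + (2 * r) ^ r : ℝ) * μ := by
        have : μ ^ r = μ ^ (2 * α) * μ := by rw [hr, pow_succ]
        rw [this]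
        field_simp
    _ ≤ 2 ^ α * (1 + (2 ^ r + (2 * r) ^ r : ℝ)) * μ * Real.log (μ + 2) ^ α := by
        have hA : (0:ℝ) ≤ 2 ^ α * (2 ^ r + (2 * r) ^ r : ℝ) * μ := by positivity
        nlinarith [hA, hlogpow, hμ0]
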